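/- Let X and Z be normed spaces, 0 < a < b, and f₁, f₂ : X → Z Lipschitz mappings with Lip(f₁) + Lip(f₂) ≤ 1 and f₁(0) = f₂(0) = 0. Then the mapping Φ : X → Z defined by Φ(x) = f₁(x) if ‖x‖ ≤ a, Φ(x) = ((b−‖x‖)/(b−a)) f₁(x) + (b(‖x‖−a)/(‖x‖(b−a))) f₂(x) if a < ‖x‖ < b, and Φ(x) = f₂(x) if ‖x‖ ≥ b, is Lipschitz with constant at most 1 + a/(b−a), and agrees with f₁ on the closed ball of radius a and with f₂ outside the open ball of radius b. -/

import Mathlib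

open Metric

set_option maxHeartbeats 2000000 in
/-- The interpolation `Φ` between `f₁` (inside radius `a`) and `f₂` (outside radius `b`)
is Lipschitz with constant at most `1 + a/(b-a)`, agrees with `f₁` on the closed ball of
radius `a` and with `f₂` outside the open ball of radius `b`. -/
theorem stmt2 {X Z : Type*} [NormedAddCommGroup X] [NormedSpace ℝ X]
    [NormedAddCommGroup Z] [NormedSpace ℝ Z]
    (a b : ℝ) (ha : 0 < a) (hab : a < b)
    (f₁ f₂ : X → Z) (K₁ K₂ : NNReal)
    (hf₁ : LipschitzWith K₁ f₁) (hf₂ : LipschitzWith K₂ f₂)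
    (hK : (K₁ : ℝ) + K₂ ≤ 1) (h₁0 : f₁ 0 = 0) (h₂0 : f₂ 0 = 0) :
    LipschitzWith (Real.toNNReal (1 + a / (b - a)))
      (fun x : X => if ‖x‖ ≤ a then f₁ x
        else if ‖x‖ < b then
          ((b - ‖x‖) / (b - a)) • f₁ x + ((b * (‖x‖ - a)) / (‖x‖ * (b - a))) • f₂ x
        else f₂ x) ∧
    (∀ x : X, ‖x‖ ≤ a →
      (if ‖x‖ ≤ a then f₁ x
        else if ‖x‖ < b then
          ((b - ‖x‖) / (b - a)) • f₁ x + ((b * (‖x‖ - a)) / (‖x‖ * (b - a))) • f₂ x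
        else f₂ x) = f₁ x) ∧
    (∀ x : X, b ≤ ‖x‖ →
      (if ‖x‖ ≤ a then f₁ x
        else if ‖x‖ < b then
          ((b - ‖x‖) / (b - a)) • f₁ x + ((b * (‖x‖ - a)) / (‖x‖ * (b - a))) • f₂ x
        else f₂ x) = f₂ x) := by
  have hba : (0:ℝ) < b - a := sub_pos.2 hab
  have hb : (0:ℝ) < b := ha.trans hab
  have hK₁ : (0:ℝ) ≤ K₁ := K₁.coe_nonneg
  have hK₂ : (0:ℝ) ≤ K₂ := K₂.coe_nonneg
  have hL0 : (0:ℝ) ≤ 1 + a / (b - a) := by positivity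
  have hLb : 1 + a / (b - a) = b / (b - a) := by field_simp; ring
  have hn1 : ∀ z : X, ‖f₁ z‖ ≤ K₁ * ‖z‖ := by
    intro z
    have := hf₁.dist_le_mul z 0
    simpa [dist_eq_norm, h₁0] using this
  have hn2 : ∀ z : X, ‖f₂ z‖ ≤ K₂ * ‖z‖ := by
    intro z
    have := hf₂.dist_le_mul z 0
    simpa [dist_eq_norm, h₂0] using this
  have hd1 : ∀ x y : X, ‖f₁ x - f₁ y‖ ≤ K₁ * ‖x - y‖ := by
    intro x y
    have := hf₁.dist_le_mul x y
    simpa [dist_eq_norm] using this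
  have hd2 : ∀ x y : X, ‖f₂ x - f₂ y‖ ≤ K₂ * ‖x - y‖ := by
    intro x y
    have := hf₂.dist_le_mul x y
    simpa [dist_eq_norm] using this
  have key : ∀ x y : X, ‖x‖ ≤ ‖y‖ →
      ‖(if ‖x‖ ≤ a then f₁ x else if ‖x‖ < b then
          ((b - ‖x‖) / (b - a)) • f₁ x + ((b * (‖x‖ - a)) / (‖x‖ * (b - a))) • f₂ x
        else f₂ x)
        - (if ‖y‖ ≤ a then f₁ y else if ‖y‖ < b then
          ((b - ‖y‖) / (b - a)) • f₁ y + ((b * (‖y‖ - a)) / (‖y‖ * (b - a))) • f₂ y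
        else f₂ y)‖ ≤ (1 + a / (b - a)) * ‖x - y‖ := by
    intro x y hxy
    have hd0 : (0:ℝ) ≤ ‖x - y‖ := norm_nonneg _
    have hds : ‖y‖ - ‖x‖ ≤ ‖x - y‖ := by
      have := norm_sub_norm_le y x
      rwa [norm_sub_rev] at this
    have hx0 : (0:ℝ) ≤ ‖x‖ := norm_nonneg _
    have hy0 : (0:ℝ) ≤ ‖y‖ := norm_nonneg _
    by_cases hxa : ‖x‖ ≤ a
    · by_cases hya : ‖y‖ ≤ a
      · -- both inside
        rw [if_pos hxa, if_pos hya]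
        calc ‖f₁ x - f₁ y‖ ≤ (K₁:ℝ) * ‖x - y‖ := hd1 x y
          _ ≤ (1 + a / (b - a)) * ‖x - y‖ := by
              apply mul_le_mul_of_nonneg_right _ hd0
              have : (0:ℝ) ≤ a / (b - a) := by positivity
              linarith
      · push_neg at hya
        by_cases hyb : ‖y‖ < b
        · -- x inside, y annulus
          rw [if_pos hxa, if_neg (not_le.2 hya), if_pos hyb]
          have hu0 : (0:ℝ) < ‖y‖ := ha.trans hya
          set s := ‖x‖
          set u := ‖y‖
          set d := ‖x - y‖
          set l : ℝ := (b - u) / (b - a) with hl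
          set m : ℝ := (b * (u - a)) / (u * (b - a)) with hm
          have hl0 : 0 ≤ l := div_nonneg (by linarith) hba.le
          have hl1 : l ≤ 1 := by
            rw [hl, div_le_one hba]; linarith
          have hm0 : 0 ≤ m := by
            rw [hm]
            apply div_nonneg (by nlinarith) (by positivity)
          have hid : f₁ x - (l • f₁ y + m • f₂ y)
              = l • (f₁ x - f₁ y) + (1 - l) • f₁ x + (-m) • f₂ y := by module
          rw [hid]
          have e1 : ‖l • (f₁ x - f₁ y)‖ ≤ l * ((K₁ : ℝ) * d) := by
            rw [norm_smul, Real.norm_eq_abs, abs_of_nonneg hl0]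
            exact mul_le_mul_of_nonneg_left (hd1 x y) hl0
          have e2 : ‖(1 - l) • f₁ x‖ ≤ (1 - l) * ((K₁ : ℝ) * s) := by
            rw [norm_smul, Real.norm_eq_abs, abs_of_nonneg (by linarith)]
            exact mul_le_mul_of_nonneg_left (hn1 x) (by linarith)
          have e3 : ‖(-m) • f₂ y‖ ≤ m * ((K₂ : ℝ) * u) := by
            rw [norm_smul, Real.norm_eq_abs, abs_neg, abs_of_nonneg hm0]
            exact mul_le_mul_of_nonneg_left (hn2 y) hm0
          have harith : l * ((K₁ : ℝ) * d) + (1 - l) * ((K₁ : ℝ) * s) + m * ((K₂ : ℝ) * u)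
              ≤ (1 + a / (b - a)) * d := by
            have key2 : (b - u) * ((K₁:ℝ) * d) + (u - a) * ((K₁:ℝ) * s) + b * (u - a) * K₂
                ≤ b * d := by
              nlinarith [mul_nonneg (mul_nonneg (sub_nonneg.2 hya.le) hK₁) (sub_nonneg.2 hxa),
                mul_nonneg (sub_nonneg.2 (by linarith : u - a ≤ d))
                  (by positivity : (0:ℝ) ≤ a * K₁ + b * K₂),
                mul_nonneg (mul_nonneg (sub_nonneg.2 hya.le) hK₁) hd0,
                mul_nonneg hd0 (mul_nonneg hb.le (by linarith : (0:ℝ) ≤ 1 - K₁ - K₂))]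
            calc l * ((K₁ : ℝ) * d) + (1 - l) * ((K₁ : ℝ) * s) + m * ((K₂ : ℝ) * u)
                = ((b - u) * ((K₁:ℝ) * d) + (u - a) * ((K₁:ℝ) * s) + b * (u - a) * K₂)
                    / (b - a) := by
                  rw [hl, hm]; field_simp; ring
              _ ≤ (b * d) / (b - a) := by gcongr
              _ = (1 + a / (b - a)) * d := by rw [hLb]; ring
          calc ‖l • (f₁ x - f₁ y) + (1 - l) • f₁ x + (-m) • f₂ y‖
              ≤ ‖l • (f₁ x - f₁ y)‖ + ‖(1 - l) • f₁ x‖ + ‖(-m) • f₂ y‖ :=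
                norm_add₃_le
            _ ≤ l * ((K₁ : ℝ) * d) + (1 - l) * ((K₁ : ℝ) * s) + m * ((K₂ : ℝ) * u) := by
                gcongr
            _ ≤ (1 + a / (b - a)) * d := harith
        · -- x inside, y outside
          push_neg at hyb
          rw [if_pos hxa, if_neg (not_le.2 hya), if_neg (not_lt.2 hyb)]
          calc ‖f₁ x - f₂ y‖ ≤ ‖f₁ x‖ + ‖f₂ y‖ := norm_sub_le _ _
            _ ≤ (K₁:ℝ) * ‖x‖ + K₂ * ‖y‖ := add_le_add (hn1 x) (hn2 y)
            _ ≤ (1 + a / (b - a)) * ‖x - y‖ := by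
                rw [hLb, div_mul_eq_mul_div, le_div_iff₀ hba]
                nlinarith [mul_nonneg (mul_nonneg (sub_nonneg.2 hxy) hK₁) hba.le,
                  mul_nonneg (mul_nonneg hy0 hba.le) (by linarith : (0:ℝ) ≤ 1 - K₁ - K₂),
                  mul_nonneg ha.le (sub_nonneg.2 hyb),
                  mul_nonneg hb.le (by linarith : (0:ℝ) ≤ ‖x - y‖ - (‖y‖ - a))]
    · push_neg at hxa
      have hya : ¬ ‖y‖ ≤ a := not_le.2 (lt_of_lt_of_le hxa hxy)
      have hs0 : (0:ℝ) < ‖x‖ := ha.trans hxa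
      by_cases hxb : ‖x‖ < b
      · by_cases hyb : ‖y‖ < b
        · -- both annulus
          rw [if_neg (not_le.2 hxa), if_pos hxb, if_neg hya, if_pos hyb]
          have hu0 : (0:ℝ) < ‖y‖ := lt_of_lt_of_le hs0 hxy
          have hya' : a < ‖y‖ := lt_of_lt_of_le hxa hxy
          set s := ‖x‖
          set u := ‖y‖
          set d := ‖x - y‖
          set lx : ℝ := (b - s) / (b - a) with hlx
          set ly : ℝ := (b - u) / (b - a) with hly
          set mx : ℝ := (b * (s - a)) / (s * (b - a)) with hmx
          set my : ℝ := (b * (u - a)) / (u * (b - a)) with hmy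
          have hly0 : 0 ≤ ly := div_nonneg (by linarith) hba.le
          have hlxy : lx - ly = (u - s) / (b - a) := by rw [hlx, hly]; ring
          have hlxy0 : 0 ≤ lx - ly := by rw [hlxy]; apply div_nonneg (by linarith) hba.le
          have hmx0 : 0 ≤ mx := by
            rw [hmx]; apply div_nonneg (by nlinarith) (by positivity)
          have hmxy : my - mx = a * b * (u - s) / (s * u * (b - a)) := by
            rw [hmx, hmy]; field_simp; ring
          have hmxy0 : 0 ≤ my - mx := by
            rw [hmxy]
            exact div_nonneg (mul_nonneg (mul_nonneg ha.le hb.le) (sub_nonneg.2 hxy))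
              (by positivity)
          have hid : (lx • f₁ x + mx • f₂ x) - (ly • f₁ y + my • f₂ y)
              = ly • (f₁ x - f₁ y) + (lx - ly) • f₁ x + mx • (f₂ x - f₂ y)
                + (mx - my) • f₂ y := by module
          rw [hid]
          have e1 : ‖ly • (f₁ x - f₁ y)‖ ≤ ly * ((K₁ : ℝ) * d) := by
            rw [norm_smul, Real.norm_eq_abs, abs_of_nonneg hly0]
            exact mul_le_mul_of_nonneg_left (hd1 x y) hly0
          have e2 : ‖(lx - ly) • f₁ x‖ ≤ (lx - ly) * ((K₁ : ℝ) * s) := by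
            rw [norm_smul, Real.norm_eq_abs, abs_of_nonneg hlxy0]
            exact mul_le_mul_of_nonneg_left (hn1 x) hlxy0
          have e3 : ‖mx • (f₂ x - f₂ y)‖ ≤ mx * ((K₂ : ℝ) * d) := by
            rw [norm_smul, Real.norm_eq_abs, abs_of_nonneg hmx0]
            exact mul_le_mul_of_nonneg_left (hd2 x y) hmx0
          have e4 : ‖(mx - my) • f₂ y‖ ≤ (my - mx) * ((K₂ : ℝ) * u) := by
            rw [norm_smul, Real.norm_eq_abs, abs_sub_comm, abs_of_nonneg hmxy0]
            exact mul_le_mul_of_nonneg_left (hn2 y) hmxy0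
          have key2 : (b - u) * ((K₁:ℝ) * d) * s + (u - s) * ((K₁:ℝ) * s) * s
              + b * (s - a) * ((K₂:ℝ) * d) + a * b * (u - s) * K₂ ≤ b * d * s := by
            nlinarith [mul_nonneg (sub_nonneg.2 (by linarith : u - s ≤ d))
                (mul_nonneg (mul_nonneg hK₁ hs0.le) hs0.le),
              mul_nonneg (sub_nonneg.2 (by linarith : u - s ≤ d))
                (mul_nonneg (mul_nonneg ha.le hb.le) hK₂),
              mul_nonneg (mul_nonneg (mul_nonneg (sub_nonneg.2 hxy) hK₁) hd0) hs0.le,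
              mul_nonneg (mul_nonneg (mul_nonneg hd0 hs0.le) hb.le)
                (by linarith : (0:ℝ) ≤ 1 - K₁ - K₂)]
          have harith : ly * ((K₁ : ℝ) * d) + (lx - ly) * ((K₁ : ℝ) * s)
              + mx * ((K₂ : ℝ) * d) + (my - mx) * ((K₂ : ℝ) * u)
              ≤ (1 + a / (b - a)) * d := by
            calc ly * ((K₁ : ℝ) * d) + (lx - ly) * ((K₁ : ℝ) * s)
                + mx * ((K₂ : ℝ) * d) + (my - mx) * ((K₂ : ℝ) * u)
                = ((b - u) * ((K₁:ℝ) * d) * s + (u - s) * ((K₁:ℝ) * s) * s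
                    + b * (s - a) * ((K₂:ℝ) * d) + a * b * (u - s) * K₂)
                    / (s * (b - a)) := by
                  rw [hlx, hly, hmx, hmy]; field_simp; ring
              _ ≤ (b * d * s) / (s * (b - a)) := by gcongr
              _ = (1 + a / (b - a)) * d := by rw [hLb]; field_simp
          calc ‖ly • (f₁ x - f₁ y) + (lx - ly) • f₁ x + mx • (f₂ x - f₂ y)
                + (mx - my) • f₂ y‖
              ≤ ‖ly • (f₁ x - f₁ y) + (lx - ly) • f₁ x + mx • (f₂ x - f₂ y)‖
                + ‖(mx - my) • f₂ y‖ := norm_add_le _ _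
            _ ≤ ‖ly • (f₁ x - f₁ y)‖ + ‖(lx - ly) • f₁ x‖ + ‖mx • (f₂ x - f₂ y)‖
                + ‖(mx - my) • f₂ y‖ := by
                have := norm_add₃_le (E := Z) (a := ly • (f₁ x - f₁ y))
                  (b := (lx - ly) • f₁ x) (c := mx • (f₂ x - f₂ y))
                linarith
            _ ≤ ly * ((K₁ : ℝ) * d) + (lx - ly) * ((K₁ : ℝ) * s)
                + mx * ((K₂ : ℝ) * d) + (my - mx) * ((K₂ : ℝ) * u) := by
                exact add_le_add (add_le_add (add_le_add e1 e2) e3) e4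
            _ ≤ (1 + a / (b - a)) * d := harith
        · -- x annulus, y outside
          push_neg at hyb
          rw [if_neg (not_le.2 hxa), if_pos hxb, if_neg hya, if_neg (not_lt.2 hyb)]
          set s := ‖x‖
          set u := ‖y‖
          set d := ‖x - y‖
          set lx : ℝ := (b - s) / (b - a) with hlx
          set mx : ℝ := (b * (s - a)) / (s * (b - a)) with hmx
          have hlx0 : 0 ≤ lx := div_nonneg (by linarith) hba.le
          have hmx1 : 1 - mx = a * (b - s) / (s * (b - a)) := by
            rw [hmx]; field_simp; ring
          have hmx1' : 0 ≤ 1 - mx := by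
            rw [hmx1]; apply div_nonneg (by nlinarith) (by positivity)
          have hid : (lx • f₁ x + mx • f₂ x) - f₂ y
              = lx • f₁ x + (f₂ x - f₂ y) + (mx - 1) • f₂ x := by module
          rw [hid]
          have e1 : ‖lx • f₁ x‖ ≤ lx * ((K₁ : ℝ) * s) := by
            rw [norm_smul, Real.norm_eq_abs, abs_of_nonneg hlx0]
            exact mul_le_mul_of_nonneg_left (hn1 x) hlx0
          have e2 : ‖f₂ x - f₂ y‖ ≤ (K₂ : ℝ) * d := hd2 x y
          have e3 : ‖(mx - 1) • f₂ x‖ ≤ (1 - mx) * ((K₂ : ℝ) * s) := by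
            rw [norm_smul, Real.norm_eq_abs, abs_sub_comm, abs_of_nonneg hmx1']
            exact mul_le_mul_of_nonneg_left (hn2 x) hmx1'
          have hdb : b - s ≤ d := by linarith
          have key2 : (b - s) * ((K₁:ℝ) * s) + (K₂:ℝ) * d * (b - a) + a * (b - s) * K₂
              ≤ b * d := by
            nlinarith [mul_nonneg (sub_nonneg.2 hdb)
                (by positivity : (0:ℝ) ≤ K₁ * s + a * K₂),
              mul_nonneg (mul_nonneg hd0 hK₁) (by linarith : (0:ℝ) ≤ b - s),
              mul_nonneg (mul_nonneg hd0 hb.le) (by linarith : (0:ℝ) ≤ 1 - K₁ - K₂)]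
          have harith : lx * ((K₁ : ℝ) * s) + (K₂ : ℝ) * d + (1 - mx) * ((K₂ : ℝ) * s)
              ≤ (1 + a / (b - a)) * d := by
            calc lx * ((K₁ : ℝ) * s) + (K₂ : ℝ) * d + (1 - mx) * ((K₂ : ℝ) * s)
                = ((b - s) * ((K₁:ℝ) * s) + (K₂:ℝ) * d * (b - a) + a * (b - s) * K₂)
                    / (b - a) := by
                  rw [hlx, hmx1]; field_simp
              _ ≤ (b * d) / (b - a) := by gcongr
              _ = (1 + a / (b - a)) * d := by rw [hLb]; ring
          calc ‖lx • f₁ x + (f₂ x - f₂ y) + (mx - 1) • f₂ x‖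
              ≤ ‖lx • f₁ x‖ + ‖f₂ x - f₂ y‖ + ‖(mx - 1) • f₂ x‖ := norm_add₃_le
            _ ≤ lx * ((K₁ : ℝ) * s) + (K₂ : ℝ) * d + (1 - mx) * ((K₂ : ℝ) * s) := by
                exact add_le_add (add_le_add e1 e2) e3
            _ ≤ (1 + a / (b - a)) * d := harith
      · -- both outside
        push_neg at hxb
        have hyb : ¬ ‖y‖ < b := not_lt.2 (le_trans hxb hxy)
        rw [if_neg (not_le.2 hxa), if_neg (not_lt.2 hxb), if_neg hya, if_neg hyb]
        calc ‖f₂ x - f₂ y‖ ≤ (K₂:ℝ) * ‖x - y‖ := hd2 x y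
          _ ≤ (1 + a / (b - a)) * ‖x - y‖ := by
              apply mul_le_mul_of_nonneg_right _ hd0
              have : (0:ℝ) ≤ a / (b - a) := by positivity
              linarith
  refine ⟨?_, ?_, ?_⟩
  · apply LipschitzWith.of_dist_le_mul
    intro x y
    rw [dist_eq_norm, dist_eq_norm, Real.coe_toNNReal _ hL0]
    show ‖(if ‖x‖ ≤ a then f₁ x
        else if ‖x‖ < b then
          ((b - ‖x‖) / (b - a)) • f₁ x + ((b * (‖x‖ - a)) / (‖x‖ * (b - a))) • f₂ x
        else f₂ x) - (if ‖y‖ ≤ a then f₁ y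
        else if ‖y‖ < b then
          ((b - ‖y‖) / (b - a)) • f₁ y + ((b * (‖y‖ - a)) / (‖y‖ * (b - a))) • f₂ y
        else f₂ y)‖ ≤ (1 + a / (b - a)) * ‖x - y‖
    rcases le_total ‖x‖ ‖y‖ with h | h
    · exact key x y h
    · rw [norm_sub_rev x y, norm_sub_rev]
      exact key y x h
  · intro x hx
    rw [if_pos hx]
  · intro x hx
    rw [if_neg (by push_neg; linarith), if_neg (not_lt.2 hx)]
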